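/- arXiv:1112.3254 — 4 statements merged into one kernel-verified Lean document; each statement's English description precedes it below -/
import Mathlib

section
/- Let G be a finite simple graph with a VPT-representation ⟨P,T⟩, let C be a clique of G, and let q be a vertex of T such that C = C_q. Then: (i) for every vertex v of the branch graph B(G/C), the path P_v is entirely contained in some branch of T at q; and (ii) if v and w are adjacent in B(G/C), then P_v and P_w are not contained in the same branch of T at q. -/
open SimpleGraph

/-- `S` induces a path (a nonempty connected subgraph with maximum degree at most 2,
i.e. a subtree which is a path when `T` is a tree) in the graph `T`. -/
def IsPathSet {W : Type*} (T : SimpleGraph W) (S : Set W) : Prop :=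
  S.Nonempty ∧
  (∀ x ∈ S, ∀ y ∈ S, ∃ p : T.Walk x y, ∀ z ∈ p.support, z ∈ S) ∧
  (∀ x ∈ S, (T.neighborSet x ∩ S).ncard ≤ 2)

/-- A VPT-representation of `G` on host tree `T`: a family of paths of the tree `T`,
one for each vertex of `G`, such that two distinct vertices of `G` are adjacent iff
the corresponding paths share a vertex. -/
structure VPTRep {V W : Type*} (G : SimpleGraph V) (T : SimpleGraph W) where
  tree : T.IsTree
  path : V → Set W
  isPath : ∀ v, IsPathSet T (path v)
  adj_iff : ∀ u v : V, u ≠ v → (G.Adj u v ↔ (path u ∩ path v).Nonempty)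

/-- `G` is a VPT graph: it has a VPT-representation on some finite host tree. -/
def IsVPT {V : Type*} (G : SimpleGraph V) : Prop :=
  ∃ (n : ℕ) (T : SimpleGraph (Fin n)), Nonempty (VPTRep G T)

/-- `G` belongs to the class [h,2,1]: it has a VPT-representation whose host tree has
maximum degree at most `h`. -/
def MemH21 {V : Type*} (G : SimpleGraph V) (h : ℕ) : Prop :=
  ∃ (n : ℕ) (T : SimpleGraph (Fin n)) (_ : VPTRep G T),
    ∀ x : Fin n, (T.neighborSet x).ncard ≤ h

/-- `C` is a clique of `G`: a maximal set of pairwise adjacent vertices. -/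
def IsMaxClique {V : Type*} (G : SimpleGraph V) (C : Set V) : Prop :=
  G.IsClique C ∧ ∀ D, G.IsClique D → C ⊆ D → D = C

/-- The branch graph `B(G/C)`, as a graph on the vertex set of `G`; its relevant
vertices are those of `branchVerts G C`, all others are isolated. -/
def branchGraph {V : Type*} (G : SimpleGraph V) (C : Set V) : SimpleGraph V where
  Adj v w := v ∉ C ∧ w ∉ C ∧ v ≠ w ∧ ¬ G.Adj v w ∧
    (∃ u ∈ C, G.Adj u v ∧ G.Adj u w) ∧
    (∃ v' ∈ C, G.Adj v' v ∧ ¬ G.Adj v' w) ∧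
    (∃ w' ∈ C, G.Adj w' w ∧ ¬ G.Adj w' v)
  symm := by
    constructor
    rintro v w ⟨h1, h2, h3, h4, ⟨u, hu, hu1, hu2⟩, ⟨v', hv', hv1, hv2⟩, ⟨w', hw', hw1, hw2⟩⟩
    exact ⟨h2, h1, h3.symm, fun hadj => h4 hadj.symm, ⟨u, hu, hu2, hu1⟩,
      ⟨w', hw', hw1, hw2⟩, ⟨v', hv', hv1, hv2⟩⟩
  loopless := by constructor; rintro v ⟨_, _, h, _⟩; exact h rfl

/-- The vertex set of the branch graph `B(G/C)`: vertices outside `C` adjacent to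
some vertex of `C`. -/
def branchVerts {V : Type*} (G : SimpleGraph V) (C : Set V) : Set V :=
  {v | v ∉ C ∧ ∃ u ∈ C, G.Adj u v}

/-- `B` is a branch of `T` at `q`: a connected component of `T - q`, i.e. the set of
vertices reachable from some neighbor `y` of `q` by a walk avoiding `q`. -/
def BranchAt {W : Type*} (T : SimpleGraph W) (q : W) (B : Set W) : Prop :=
  ∃ y, T.Adj q y ∧ B = {x | ∃ p : T.Walk y x, q ∉ p.support}

/-- `(S, K)` is a split partition of `G`: `S` is a stable set, `K` is a complete set,
and they partition the vertices. -/
def IsSplitPartition {V : Type*} (G : SimpleGraph V) (S K : Set V) : Prop :=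
  (∀ v, v ∈ S ∨ v ∈ K) ∧ Disjoint S K ∧
  (∀ a ∈ S, ∀ b ∈ S, ¬ G.Adj a b) ∧ G.IsClique K

open SimpleGraph Walk

/-- In an acyclic graph, the support of a path is contained in the support of any walk
with the same endpoints. -/
lemma path_support_subset_walk {W : Type*} [DecidableEq W] {T : SimpleGraph W} (hT : T.IsAcyclic) {x y : W}
    {p : T.Walk x y} (hp : p.IsPath) (r : T.Walk x y) : p.support ⊆ r.support := by
  have h1 : p = r.bypass := by
    have := hT.path_unique ⟨p, hp⟩ ⟨r.bypass, r.bypass_isPath⟩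
    exact congrArg Subtype.val this
  rw [h1]; exact r.support_bypass_subset

/-- Two paths starting at the same vertex, whose supports lie in a set of max degree ≤ 2
that contains an extra neighbor `q` of the common start avoided by both paths, are nested. -/
lemma nested_paths {W : Type*} [Finite W] {T : SimpleGraph W} {S : Set W}
    (hdeg : ∀ x ∈ S, (T.neighborSet x ∩ S).ncard ≤ 2) :
    ∀ {y a : W} (p1 : T.Walk y a), p1.IsPath → (∀ z ∈ p1.support, z ∈ S) →
    ∀ {b : W} (p2 : T.Walk y b), p2.IsPath → (∀ z ∈ p2.support, z ∈ S) →
    ∀ q ∈ S, T.Adj q y → q ∉ p1.support → q ∉ p2.support →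
    a ∈ p2.support ∨ b ∈ p1.support := by
  intro y a p1
  induction p1 with
  | nil =>
    intro _ _ b p2 _ _ _ _ _ _ _
    exact Or.inl p2.start_mem_support
  | @cons y y₁ a h p ih =>
    intro hp1 hS1 b p2 hp2 hS2 q hqS hqy hq1 hq2
    cases p2 with
    | nil => exact Or.inr (start_mem_support _)
    | @cons _ y₂ _ h2 p2' =>
      by_cases hyy : y₁ = y₂
      · subst hyy
        obtain ⟨hp, hynp⟩ := (cons_isPath_iff h p).mp hp1
        obtain ⟨hp2', hynp2⟩ := (cons_isPath_iff h2 p2').mp hp2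
        have := ih hp (fun z hz => hS1 z (by simp [support_cons, hz]))
          p2' hp2' (fun z hz => hS2 z (by simp [support_cons, hz]))
          y (hS1 y (by simp [support_cons])) h hynp hynp2
        rcases this with h' | h'
        · exact Or.inl (by simp [support_cons, h'])
        · exact Or.inr (by simp [support_cons, h'])
      · exfalso
        have hy1 : y₁ ∈ S := hS1 y₁ (by simp [support_cons, p.start_mem_support])
        have hy2 : y₂ ∈ S := hS2 y₂ (by simp [support_cons, p2'.start_mem_support])
        have hqy1 : q ≠ y₁ := by
          rintro rfl; exact hq1 (by simp [support_cons, p.start_mem_support])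
        have hqy2 : q ≠ y₂ := by
          rintro rfl; exact hq2 (by simp [support_cons, p2'.start_mem_support])
        have hsub : ({q, y₁, y₂} : Set W) ⊆ T.neighborSet y ∩ S := by
          rintro z (rfl | rfl | rfl)
          · exact ⟨hqy.symm, hqS⟩
          · exact ⟨h, hy1⟩
          · exact ⟨h2, hy2⟩
        have h3 : ({q, y₁, y₂} : Set W).ncard = 3 := by
          rw [Set.ncard_insert_of_notMem (by simp [hqy1, hqy2]),
            Set.ncard_pair hyy]
        have hle := Set.ncard_le_ncard hsub (Set.toFinite _)
        have := hdeg y (hS1 y (by simp [support_cons]))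
        omega

lemma exists_branch_walk {W : Type*} [DecidableEq W] {T : SimpleGraph W} (hT : T.Connected) {q x : W}
    (hxq : x ≠ q) : ∃ y, T.Adj q y ∧ ∃ p : T.Walk y x, q ∉ p.support := by
  obtain ⟨w0⟩ := hT q x
  have hb := w0.bypass_isPath
  cases hc : w0.bypass with
  | nil => exact absurd rfl hxq.symm
  | @cons _ y _ h' p' =>
    rw [hc] at hb
    exact ⟨y, h', p', ((cons_isPath_iff h' p').mp hb).2⟩

/-- In a VPT-representation `⟨P,T⟩` of `G`, if `C` is a clique of `G` with
`C = C_q`, then (i) the path of every vertex of the branch graph `B(G/C)` is contained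
in some branch of `T` at `q`, and (ii) paths of vertices adjacent in `B(G/C)` are not
contained in a same branch of `T` at `q`. -/

theorem stmt0 {V : Type} [Fintype V] {n : ℕ} (G : SimpleGraph V) (T : SimpleGraph (Fin n))
    (rep : VPTRep G T) (C : Set V) (hC : IsMaxClique G C) (q : Fin n)
    (hq : C = {v : V | q ∈ rep.path v}) :
    (∀ v ∈ branchVerts G C, ∃ B : Set (Fin n), BranchAt T q B ∧ rep.path v ⊆ B) ∧
    (∀ v w : V, (branchGraph G C).Adj v w →
      ¬ ∃ B : Set (Fin n), BranchAt T q B ∧ rep.path v ⊆ B ∧ rep.path w ⊆ B) := by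
  have hacy : T.IsAcyclic := rep.tree.IsAcyclic
  have hqmem : ∀ c ∈ C, q ∈ rep.path c := fun c hc => by rw [hq] at hc; exact hc
  have hqnmem : ∀ c, c ∉ C → q ∉ rep.path c := fun c hc hmem => hc (by rw [hq]; exact hmem)
  have memmem : ∀ {a b : V}, a ≠ b → ∀ {x : Fin n}, x ∈ rep.path a → x ∈ rep.path b →
      G.Adj a b := by
    intro a b hne x hx hy
    exact (rep.adj_iff a b hne).mpr ⟨x, hx, hy⟩
  have part1 : ∀ v, v ∉ C → ∃ B : Set (Fin n), BranchAt T q B ∧ rep.path v ⊆ B := by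
    intro v hv
    obtain ⟨x, hx⟩ := (rep.isPath v).1
    have hqv : q ∉ rep.path v := hqnmem v hv
    have hxq : x ≠ q := fun h => hqv (h ▸ hx)
    obtain ⟨y, hqy, p', hp'⟩ := exists_branch_walk rep.tree.isConnected hxq
    refine ⟨{z | ∃ p : T.Walk y z, q ∉ p.support}, ⟨y, hqy, rfl⟩, ?_⟩
    intro z hz
    obtain ⟨wv, hwv⟩ := (rep.isPath v).2.1 x hx z hz
    refine ⟨p'.append wv, ?_⟩
    rw [Walk.mem_support_append_iff]
    rintro (h | h)
    · exact hp' h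
    · exact hqv (hwv q h)
  constructor
  · intro v hv
    exact part1 v hv.1
  · rintro v w hvw ⟨B, ⟨y, hqy, rfl⟩, hPv, hPw⟩
    obtain ⟨hvC, hwC, hvne, hnadj, ⟨u, huC, huv, huw⟩, ⟨v', hv'C, hv'v, hv'w⟩,
      ⟨w', hw'C, hw'w, hw'v⟩⟩ := hvw
    set B : Set (Fin n) := {x | ∃ p : T.Walk y x, q ∉ p.support} with hB
    have hqB : q ∉ B := by
      rintro ⟨p, hp⟩
      exact hp p.end_mem_support
    -- entry lemma: a path of a vertex of C containing a point of B contains, on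
    -- the unique tree path from y to that point, only points of that path and of B
    have entry : ∀ (c : V), q ∈ rep.path c → ∀ z ∈ rep.path c, z ∈ B →
        y ∈ rep.path c ∧ ∃ p' : T.Walk y z, p'.IsPath ∧
          (∀ m ∈ p'.support, m ∈ rep.path c ∧ m ∈ B) := by
      intro c hqc z hzc hzB
      obtain ⟨w1, hw1⟩ := hzB
      have hbp : w1.bypass.IsPath := w1.bypass_isPath
      have hqbp : q ∉ w1.bypass.support := fun h => hw1 (w1.support_bypass_subset h)
      have hcons : (Walk.cons hqy w1.bypass).IsPath := hbp.cons hqbp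
      obtain ⟨wc, hwc⟩ := (rep.isPath c).2.1 q hqc z hzc
      have hsub : (Walk.cons hqy w1.bypass).support ⊆ wc.support :=
        path_support_subset_walk hacy hcons wc
      have hsupc : ∀ m ∈ w1.bypass.support, m ∈ rep.path c := by
        intro m hm
        exact hwc m (hsub (by rw [Walk.support_cons]; exact List.mem_cons_of_mem _ hm))
      refine ⟨hsupc y w1.bypass.start_mem_support, w1.bypass, hbp, ?_⟩
      intro m hm
      refine ⟨hsupc m hm, ⟨w1.bypass.takeUntil m hm, ?_⟩⟩
      exact fun h => hqbp (Walk.support_takeUntil_subset _ _ h)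
    -- the key contradiction, applied symmetrically
    have final : ∀ (v w w' : V) (a₀ b₀ : Fin n) (pp : T.Walk y b₀), pp.IsPath →
        v ≠ w → w' ∈ C → G.Adj w' w → ¬G.Adj w' v → ¬G.Adj v w →
        a₀ ∈ rep.path v → b₀ ∈ rep.path w → rep.path v ⊆ B → rep.path w ⊆ B →
        a₀ ∈ pp.support → False := by
      intro v w w' a₀ b₀ pp hpp hvw hw'C hw'w hw'v hnvw ha₀ hb₀ hPv hPw hmem
      have hvC : v ∉ C := by
        intro hvC
        exact hqB (hPv (hqmem v hvC))
      have hwC : w ∉ C := by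
        intro hwC
        exact hqB (hPw (hqmem w hwC))
      have hw'v' : w' ≠ v := fun h => hvC (h ▸ hw'C)
      have hw'w' : w' ≠ w := fun h => hwC (h ▸ hw'C)
      obtain ⟨b, hbw', hbw⟩ := (rep.adj_iff w' w hw'w').mp hw'w
      have hyw' : y ∈ rep.path w' :=
        (entry w' (hqmem w' hw'C) b hbw' (hPw hbw)).1
      obtain ⟨walk1, hwalk1⟩ := (rep.isPath w').2.1 y hyw' b hbw'
      obtain ⟨walk2, hwalk2⟩ := (rep.isPath w).2.1 b hbw b₀ hb₀
      have hsub : pp.support ⊆ (walk1.append walk2).support :=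
        path_support_subset_walk hacy hpp _
      have := hsub hmem
      rw [Walk.mem_support_append_iff] at this
      rcases this with h | h
      · exact hw'v (memmem hw'v' (hwalk1 a₀ h) ha₀)
      · exact hnvw (memmem hvw ha₀ (hwalk2 a₀ h))
    -- intersection points with P_u
    have huv' : u ≠ v := fun h => hvC (h ▸ huC)
    have huw' : u ≠ w := fun h => hwC (h ▸ huC)
    obtain ⟨a₀, ha₀u, ha₀v⟩ := (rep.adj_iff u v huv').mp huv
    obtain ⟨b₀, hb₀u, hb₀w⟩ := (rep.adj_iff u w huw').mp huw
    have hqu : q ∈ rep.path u := hqmem u huC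
    obtain ⟨-, pa, hpa, hpaS⟩ := entry u hqu a₀ ha₀u (hPv ha₀v)
    obtain ⟨-, pb, hpb, hpbS⟩ := entry u hqu b₀ hb₀u (hPw hb₀w)
    have hqpa : q ∉ pa.support := fun h => hqB (hpaS q h).2
    have hqpb : q ∉ pb.support := fun h => hqB (hpbS q h).2
    have hnest := nested_paths (rep.isPath u).2.2 pa hpa (fun z hz => (hpaS z hz).1)
      pb hpb (fun z hz => (hpbS z hz).1) q hqu hqy hqpa hqpb
    rcases hnest with h | h
    · exact final v w w' a₀ b₀ pb hpb hvne hw'C hw'w hw'v hnadj ha₀v hb₀w hPv hPw h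
    · exact final w v v' b₀ a₀ pa hpa hvne.symm hv'C hv'v hv'w (fun h' => hnadj h'.symm)
        hb₀w ha₀v hPw hPv h
end

section
/- Let G be a finite simple graph admitting an (h,2,1)-representation, where h ≥ 2. Then for every clique C of G, the branch graph B(G/C) is h-colorable. -/
open SimpleGraph

set_option linter.unusedSectionVars false
namespace TreeAux

variable {W : Type*} [DecidableEq W] {T : SimpleGraph W}

/-- The unique path between two vertices of a tree, as a walk. -/
noncomputable def geo (ht : T.IsTree) (x y : W) : T.Walk x y :=
  (ht.existsUnique_path x y).choose

lemma geo_isPath (ht : T.IsTree) (x y : W) : (geo ht x y).IsPath :=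
  (ht.existsUnique_path x y).choose_spec.1

lemma eq_geo (ht : T.IsTree) {x y : W} (p : T.Walk x y) (hp : p.IsPath) :
    p = geo ht x y :=
  (ht.existsUnique_path x y).choose_spec.2 p hp

lemma geo_reverse (ht : T.IsTree) (x y : W) :
    (geo ht x y).reverse = geo ht y x :=
  eq_geo ht _ (geo_isPath ht x y).reverse

lemma mem_geo_symm (ht : T.IsTree) {x y z : W} (hz : z ∈ (geo ht x y).support) :
    z ∈ (geo ht y x).support := by
  rw [← geo_reverse ht x y, Walk.support_reverse, List.mem_reverse]
  exact hz

/-- Geodesic convexity of a set in a tree. -/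
def GeoConvex (ht : T.IsTree) (S : Set W) : Prop :=
  ∀ x ∈ S, ∀ y ∈ S, ∀ z ∈ (geo ht x y).support, z ∈ S

lemma geoConvex_of_walks (ht : T.IsTree) {S : Set W}
    (hS : ∀ x ∈ S, ∀ y ∈ S, ∃ p : T.Walk x y, ∀ z ∈ p.support, z ∈ S) :
    GeoConvex ht S := by
  intro x hx y hy z hz
  obtain ⟨p, hp⟩ := hS x hx y hy
  have hb : p.bypass = geo ht x y := eq_geo ht _ p.bypass_isPath
  rw [← hb] at hz
  exact hp z (p.support_bypass_subset hz)

lemma geoConvex_inter (ht : T.IsTree) {S₁ S₂ : Set W}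
    (h₁ : GeoConvex ht S₁) (h₂ : GeoConvex ht S₂) : GeoConvex ht (S₁ ∩ S₂) :=
  fun x hx y hy z hz => ⟨h₁ x hx.1 y hy.1 z hz, h₂ x hx.2 y hy.2 z hz⟩

/-- A walk ending in `S` has a first vertex in `S`. -/
lemma exists_prefix_first {u v : W} (p : T.Walk u v) (S : Set W) (hv : v ∈ S) :
    ∃ z, z ∈ S ∧ ∃ (q : T.Walk u z) (r : T.Walk z v), p = q.append r ∧
      ∀ y ∈ q.support, y ∈ S → y = z := by
  induction p with
  | nil => exact ⟨_, hv, Walk.nil, Walk.nil, rfl, fun y hy _ => by simpa using hy⟩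
  | @cons a b c hab p ih =>
    by_cases ha : a ∈ S
    · exact ⟨a, ha, Walk.nil, Walk.cons hab p, rfl, fun y hy _ => by simpa using hy⟩
    · obtain ⟨z, hzS, q, r, hsplit, hfirst⟩ := ih hv
      refine ⟨z, hzS, Walk.cons hab q, r, by rw [hsplit]; rfl, ?_⟩
      intro y hy hyS
      rcases (by simpa using hy : y = a ∨ y ∈ q.support) with rfl | hy'
      · exact absurd hyS ha
      · exact hfirst y hy' hyS

/-- Median of three vertices of a tree. -/
lemma median (ht : T.IsTree) (a b c : W) :
    ∃ m, m ∈ (geo ht a b).support ∧ m ∈ (geo ht a c).support ∧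
      m ∈ (geo ht b c).support := by
  obtain ⟨z, hzS, q, r, hsplit, hfirst⟩ :=
    exists_prefix_first ((geo ht a b).reverse)
      {y | y ∈ (geo ht a c).support} (geo ht a c).start_mem_support
  have hzac : z ∈ (geo ht a c).support := hzS
  have hq_sub : q.support ⊆ (geo ht a b).support := by
    intro y hy
    have : y ∈ (geo ht a b).reverse.support := by
      rw [hsplit]
      exact Walk.subset_support_append_left _ _ hy
    rwa [Walk.support_reverse, List.mem_reverse] at this
  have hzab : z ∈ (geo ht a b).support := hq_sub q.end_mem_support
  -- build the path from b to c through z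
  have hqp : q.IsPath := by
    have : (q.append r).IsPath := hsplit ▸ (geo_isPath ht a b).reverse
    exact this.of_append_left
  set d := (geo ht a c).dropUntil z hzac with hd_def
  have hdp : d.IsPath := (geo_isPath ht a c).dropUntil hzac
  have hz_tail : z ∉ d.support.tail := by
    have := hdp.support_nodup
    rw [d.support_eq_cons] at this
    exact (List.nodup_cons.1 this).1
  have hw : (q.append d).IsPath := by
    rw [Walk.isPath_def, Walk.support_append]
    refine List.nodup_append.2 ⟨hqp.support_nodup, hdp.support_nodup.tail, ?_⟩
    intro y hyq y' hyd hyy'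
    rw [← hyy'] at hyd
    have hyS : y ∈ (geo ht a c).support :=
      Walk.support_dropUntil_subset _ hzac (List.mem_of_mem_tail hyd)
    have : y = z := hfirst y hyq hyS
    exact hz_tail (this ▸ hyd)
  have hgeo : q.append d = geo ht b c := eq_geo ht _ hw
  have hzbc : z ∈ (geo ht b c).support := by
    rw [← hgeo]
    exact Walk.subset_support_append_left _ _ q.end_mem_support
  exact ⟨z, hzab, hzac, hzbc⟩


lemma takeUntil_geo (ht : T.IsTree) {x y m : W} (hm : m ∈ (geo ht x y).support) :
    (geo ht x y).takeUntil m hm = geo ht x m :=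
  eq_geo ht _ ((geo_isPath ht x y).takeUntil hm)

lemma dropUntil_geo (ht : T.IsTree) {x y m : W} (hm : m ∈ (geo ht x y).support) :
    (geo ht x y).dropUntil m hm = geo ht m y :=
  eq_geo ht _ ((geo_isPath ht x y).dropUntil hm)

lemma geo_support_split (ht : T.IsTree) {x y m : W} (hm : m ∈ (geo ht x y).support) :
    (geo ht x y).support = (geo ht x m).support ++ (geo ht m y).support.tail := by
  conv_lhs => rw [← (geo ht x y).take_spec hm]
  rw [Walk.support_append, takeUntil_geo ht hm, dropUntil_geo ht hm]

/-- Disjointness of the two halves of a geodesic split at `m`. -/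
lemma geo_split_disjoint (ht : T.IsTree) {x y m : W} (hm : m ∈ (geo ht x y).support)
    {a : W} (ha1 : a ∈ (geo ht x m).support) (ha2 : a ∈ (geo ht m y).support.tail) :
    False := by
  have hnd : ((geo ht x m).support ++ (geo ht m y).support.tail).Nodup := by
    rw [← geo_support_split ht hm]
    exact (geo_isPath ht x y).support_nodup
  exact (List.nodup_append.1 hnd).2.2 a ha1 a ha2 rfl

/-- The neighbor of `x` in the direction of `y`. -/
noncomputable def nb (ht : T.IsTree) (x y : W) : W := (geo ht x y).getVert 1

lemma adj_nb (ht : T.IsTree) {x y : W} (hxy : x ≠ y) : T.Adj x (nb ht x y) :=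
  Walk.adj_snd (Walk.not_nil_of_ne hxy)

lemma nb_mem_tail (ht : T.IsTree) {x y : W} (hxy : x ≠ y) :
    nb ht x y ∈ (geo ht x y).support.tail := by
  obtain ⟨u, hadj, p', hp'⟩ :=
    (Walk.not_nil_iff (p := geo ht x y)).1 (Walk.not_nil_of_ne hxy)
  unfold nb
  rw [hp']
  simpa using p'.start_mem_support

lemma nb_mem_support (ht : T.IsTree) {x y : W} (hxy : x ≠ y) :
    nb ht x y ∈ (geo ht x y).support :=
  List.mem_of_mem_tail (nb_mem_tail ht hxy)

lemma getVert_one_append {x m y : W} (p : T.Walk x m) (r : T.Walk m y) (hp : ¬p.Nil) :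
    (p.append r).getVert 1 = p.getVert 1 := by
  rw [Walk.getVert_append]
  split_ifs with h
  · rfl
  · have hlen : 0 < p.length := (Walk.not_nil_iff_lt_length).1 hp
    have : p.length = 1 := by omega
    rw [show (1 : ℕ) - p.length = 0 from by omega, Walk.getVert_zero, ← this,
      Walk.getVert_length]

lemma nb_eq_of_mem (ht : T.IsTree) {x y m : W} (hm : m ∈ (geo ht x y).support)
    (hxm : x ≠ m) : nb ht x y = nb ht x m := by
  have hsplit : geo ht x y = (geo ht x m).append (geo ht m y) := by
    conv_lhs => rw [← (geo ht x y).take_spec hm]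
    rw [takeUntil_geo ht hm, dropUntil_geo ht hm]
  unfold nb
  rw [hsplit, getVert_one_append _ _ (Walk.not_nil_of_ne hxm)]

/-- The direction from `q` towards a convex set not containing `q` is well defined. -/
lemma nb_well_defined (ht : T.IsTree) {S : Set W} (hS : GeoConvex ht S) {q x x' : W}
    (hq : q ∉ S) (hx : x ∈ S) (hx' : x' ∈ S) : nb ht q x = nb ht q x' := by
  obtain ⟨m, hm1, hm2, hm3⟩ := median ht q x x'
  have hmS : m ∈ S := hS x hx x' hx' m hm3
  have hqm : q ≠ m := fun h => hq (h ▸ hmS)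
  rw [nb_eq_of_mem ht hm1 hqm, nb_eq_of_mem ht hm2 hqm]

/-- Helly property for geodesically convex sets in a tree (three sets). -/
lemma helly3 (ht : T.IsTree) {S₁ S₂ S₃ : Set W}
    (h₁ : GeoConvex ht S₁) (h₂ : GeoConvex ht S₂) (h₃ : GeoConvex ht S₃)
    (h₁₂ : (S₁ ∩ S₂).Nonempty) (h₁₃ : (S₁ ∩ S₃).Nonempty) (h₂₃ : (S₂ ∩ S₃).Nonempty) :
    (S₁ ∩ S₂ ∩ S₃).Nonempty := by
  obtain ⟨a, ha1, ha2⟩ := h₁₂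
  obtain ⟨b, hb1, hb3⟩ := h₁₃
  obtain ⟨c, hc2, hc3⟩ := h₂₃
  obtain ⟨m, hm1, hm2, hm3⟩ := median ht a b c
  exact ⟨m, ⟨⟨h₁ a ha1 b hb1 m hm1, h₂ a ha2 c hc2 m hm2⟩, h₃ b hb3 c hc3 m hm3⟩⟩

/-- Helly property for finite families of geodesically convex sets in a tree. -/
lemma hellyFinset (ht : T.IsTree) {ι : Type*} (F : Finset ι) :
    ∀ S : ι → Set W, (∀ i ∈ F, GeoConvex ht (S i)) →
      (∀ i ∈ F, ∀ j ∈ F, (S i ∩ S j).Nonempty) → F.Nonempty →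
      ∃ q, ∀ i ∈ F, q ∈ S i := by
  classical
  induction F using Finset.induction_on with
  | empty => exact fun S _ _ hne => absurd hne (by simp)
  | @insert i F hi IH =>
    intro S hconv hpair hne
    have hiI : i ∈ insert i F := Finset.mem_insert_self i F
    by_cases hF : F.Nonempty
    · obtain ⟨q, hq⟩ := IH (fun j => S j ∩ S i)
        (fun j hj => geoConvex_inter ht (hconv j (Finset.mem_insert_of_mem hj))
          (hconv i hiI))
        (fun j hj k hk => by
          have h3 := helly3 ht (hconv j (Finset.mem_insert_of_mem hj))
            (hconv k (Finset.mem_insert_of_mem hk)) (hconv i hiI)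
            (hpair j (Finset.mem_insert_of_mem hj) k (Finset.mem_insert_of_mem hk))
            (hpair j (Finset.mem_insert_of_mem hj) i hiI)
            (hpair k (Finset.mem_insert_of_mem hk) i hiI)
          exact h3.mono (fun x hx => ⟨⟨hx.1.1, hx.2⟩, hx.1.2, hx.2⟩))
        hF
      obtain ⟨j0, hj0⟩ := hF
      refine ⟨q, fun k hk => ?_⟩
      rcases Finset.mem_insert.1 hk with rfl | hk'
      · exact (hq j0 hj0).2
      · exact (hq k hk').1
    · rw [Finset.not_nonempty_iff_eq_empty] at hF
      subst hF
      obtain ⟨x, hx, -⟩ := hpair i (by simp) i (by simp)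
      exact ⟨x, fun j hj => by simp at hj; exact hj ▸ hx⟩

end TreeAux

open TreeAux

/-- If `G` admits an `(h,2,1)`-representation with `h ≥ 2`, then for
every clique `C` of `G` the branch graph `B(G/C)` is `h`-colorable. -/
theorem stmt4 {V : Type} [Fintype V] (G : SimpleGraph V) (h : ℕ) (hh : 2 ≤ h)
    (hG : MemH21 G h) :
    ∀ C : Set V, IsMaxClique G C → (branchGraph G C).Colorable h := by
  classical
  intro C hC
  obtain ⟨n, T, R, hdeg⟩ := hG
  have ht := R.tree
  by_cases hCne : C.Nonempty
  · -- main case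
    have convP : ∀ x : V, GeoConvex ht (R.path x) :=
      fun x => geoConvex_of_walks ht (R.isPath x).2.1
    -- Helly point q
    obtain ⟨q, hq'⟩ := hellyFinset ht C.toFinite.toFinset (fun c => R.path c)
      (fun c _ => convP c)
      (fun c hc c' hc' => by
        rw [Set.Finite.mem_toFinset] at hc hc'
        by_cases hcc : c = c'
        · subst hcc; simpa [Set.inter_self] using (R.isPath c).1
        · exact (R.adj_iff c c' hcc).1 (hC.1 hc hc' hcc))
      ((Set.Finite.toFinset_nonempty C.toFinite).2 hCne)
    have hq : ∀ c ∈ C, q ∈ R.path c := fun c hc => hq' c (C.toFinite.mem_toFinset.2 hc)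
    -- q avoids paths of vertices outside C
    have hqout : ∀ v, v ∉ C → q ∉ R.path v := by
      intro v hvC hqv
      have hcl : G.IsClique (insert v C) := by
        haveI : Std.Symm G.Adj := ⟨fun a b hab => hab.symm⟩
        rw [SimpleGraph.isClique_iff,
          Set.pairwise_insert_of_symmetric]
        exact ⟨hC.1, fun c hc hne => (R.adj_iff v c hne).2 ⟨q, hqv, hq c hc⟩⟩
      have hD := hC.2 _ hcl (Set.subset_insert _ _)
      exact hvC (hD ▸ Set.mem_insert v C)
    -- direction of each outside vertex
    have hdir : ∀ v, v ∉ C → nb ht q (Exists.choose (R.isPath v).1) ∈ T.neighborSet q := by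
      intro v hvC
      exact adj_nb ht (fun hEq => hqout v hvC (hEq ▸ (R.isPath v).1.choose_spec))
    -- embedding of the neighborhood of q into Fin h
    have hcard : Fintype.card (T.neighborSet q) ≤ Fintype.card (Fin h) := by
      rw [Fintype.card_fin]
      have : (T.neighborSet q).ncard = Fintype.card (T.neighborSet q) := by
        rw [← Nat.card_coe_set_eq, Nat.card_eq_fintype_card]
      have := hdeg q
      omega
    obtain ⟨e⟩ := Function.Embedding.nonempty_of_card_le hcard
    refine ⟨Coloring.mk
      (fun v => if hv : v ∉ C then e ⟨_, hdir v hv⟩ else ⟨0, by omega⟩) ?_⟩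
    intro v w hadj heq
    obtain ⟨hvC, hwC, hne, hnadj, ⟨u, hu, huv, huw⟩, ⟨v', hv', hv'1, hv'2⟩,
      ⟨w', hw', hw'1, hw'2⟩⟩ := hadj
    simp only [dif_pos hvC, dif_pos hwC] at heq
    have hnb : nb ht q (Exists.choose (R.isPath v).1)
        = nb ht q (Exists.choose (R.isPath w).1) :=
      congrArg Subtype.val (e.injective heq)
    -- set up the geometry
    have hqu : q ∈ R.path u := hq u hu
    have hqv' : q ∈ R.path v' := hq v' hv'
    have hqw' : q ∈ R.path w' := hq w' hw'
    have hqv : q ∉ R.path v := hqout v hvC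
    have hqw : q ∉ R.path w := hqout w hwC
    obtain ⟨x1, hx1u, hx1v⟩ := (R.adj_iff u v (fun hE => hvC (hE ▸ hu))).1 huv
    obtain ⟨x2, hx2u, hx2w⟩ := (R.adj_iff u w (fun hE => hwC (hE ▸ hu))).1 huw
    obtain ⟨a, hav', hav2⟩ := (R.adj_iff v' v (fun hE => hvC (hE ▸ hv'))).1 hv'1
    obtain ⟨b, hbw', hbw⟩ := (R.adj_iff w' w (fun hE => hwC (hE ▸ hw'))).1 hw'1
    have hPv'w : ∀ z, z ∈ R.path v' → z ∈ R.path w → False := fun z h1 h2 =>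
      hv'2 ((R.adj_iff v' w (fun hE => hwC (hE ▸ hv'))).2 ⟨z, h1, h2⟩)
    have hPw'v : ∀ z, z ∈ R.path w' → z ∈ R.path v → False := fun z h1 h2 =>
      hw'2 ((R.adj_iff w' v (fun hE => hvC (hE ▸ hw'))).2 ⟨z, h1, h2⟩)
    obtain ⟨s, hs1, hs2, hs3⟩ := median ht q x1 a
    have hsu : s ∈ R.path u := convP u q hqu x1 hx1u s hs1
    have hsv' : s ∈ R.path v' := convP v' q hqv' a hav' s hs2
    have hsv : s ∈ R.path v := convP v x1 hx1v a hav2 s hs3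
    obtain ⟨t, ht1, ht2, ht3⟩ := median ht q x2 b
    have htu : t ∈ R.path u := convP u q hqu x2 hx2u t ht1
    have htw' : t ∈ R.path w' := convP w' q hqw' b hbw' t ht2
    have htw : t ∈ R.path w := convP w x2 hx2w b hbw t ht3
    have hqs : q ≠ s := fun hE => hqv (hE ▸ hsv)
    have hqt : q ≠ t := fun hE => hqw (hE ▸ htw)
    have hst : nb ht q s = nb ht q t := by
      rw [← nb_well_defined ht (convP v) hqv (R.isPath v).1.choose_spec hsv,
        ← nb_well_defined ht (convP w) hqw (R.isPath w).1.choose_spec htw]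
      exact hnb
    obtain ⟨m, hm1, hm2, hm3⟩ := median ht q s t
    have hmu : m ∈ R.path u := convP u s hsu t htu m hm3
    have hmv' : m ∈ R.path v' := convP v' q hqv' s hsv' m hm1
    have hmw' : m ∈ R.path w' := convP w' q hqw' t htw' m hm2
    have hmnv : m ∉ R.path v := fun hmm => hPw'v m hmw' hmm
    have hmnw : m ∉ R.path w := fun hmm => hPv'w m hmv' hmm
    have hms : m ≠ s := fun hE => hmnv (hE ▸ hsv)
    have hmt : m ≠ t := fun hE => hmnw (hE ▸ htw)
    by_cases hmq : m = q
    · -- q lies on the geodesic from s to t, so the two directions differ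
      have p1 : nb ht q s ∈ (geo ht s q).support :=
        mem_geo_symm ht (nb_mem_support ht hqs)
      have p2 : nb ht q t ∈ (geo ht q t).support.tail := nb_mem_tail ht hqt
      rw [← hst] at p2
      exact geo_split_disjoint ht (show q ∈ (geo ht s t).support from hmq ▸ hm3) p1 p2
    · -- m has three distinct neighbors in the path of u, contradicting degree ≤ 2
      have d23 : nb ht m s ≠ nb ht m t := by
        intro hEq
        have p1 : nb ht m s ∈ (geo ht s m).support :=
          mem_geo_symm ht (nb_mem_support ht hms)
        have p2 : nb ht m t ∈ (geo ht m t).support.tail := nb_mem_tail ht hmt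
        rw [← hEq] at p2
        exact geo_split_disjoint ht hm3 p1 p2
      have d12 : nb ht m q ≠ nb ht m s := by
        intro hEq
        have p1 : nb ht m q ∈ (geo ht q m).support :=
          mem_geo_symm ht (nb_mem_support ht hmq)
        have p2 : nb ht m s ∈ (geo ht m s).support.tail := nb_mem_tail ht hms
        rw [← hEq] at p2
        exact geo_split_disjoint ht hm1 p1 p2
      have d13 : nb ht m q ≠ nb ht m t := by
        intro hEq
        have p1 : nb ht m q ∈ (geo ht q m).support :=
          mem_geo_symm ht (nb_mem_support ht hmq)
        have p2 : nb ht m t ∈ (geo ht m t).support.tail := nb_mem_tail ht hmt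
        rw [← hEq] at p2
        exact geo_split_disjoint ht hm2 p1 p2
      have hsub : ({nb ht m q, nb ht m s, nb ht m t} : Set (Fin n))
          ⊆ T.neighborSet m ∩ R.path u := by
        intro z hz
        rcases hz with rfl | rfl | rfl
        · exact ⟨adj_nb ht hmq, convP u m hmu q hqu _ (nb_mem_support ht hmq)⟩
        · exact ⟨adj_nb ht hms, convP u m hmu s hsu _ (nb_mem_support ht hms)⟩
        · exact ⟨adj_nb ht hmt, convP u m hmu t htu _ (nb_mem_support ht hmt)⟩
      have h3 : ({nb ht m q, nb ht m s, nb ht m t} : Set (Fin n)).ncard = 3 := by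
        rw [Set.ncard_insert_of_notMem (by simp [d12, d13]), Set.ncard_pair d23]
      have hle := Set.ncard_le_ncard hsub (Set.toFinite _)
      have hdeg2 := (R.isPath u).2.2 m hmu
      omega
  · -- C is empty: the branch graph has no edges
    refine ⟨Coloring.mk (fun _ => ⟨0, by omega⟩) ?_⟩
    intro v w hvw
    obtain ⟨-, -, -, -, ⟨u, hu, -⟩, -⟩ := hvw
    exact absurd ⟨u, hu⟩ hCne
end

section
/- If G belongs to the class SVS, then for every clique C of G the branch graph B(G/C) is a perfect graph. -/
open SimpleGraph

/-- The cycle graph `Cₙ` on `Fin n` (a cycle for `n ≥ 3`): `i` is adjacent to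
`i ± 1 (mod n)`. -/
def cycleG (n : ℕ) : SimpleGraph (Fin n) :=
  SimpleGraph.fromRel (fun i j => (j : ℕ) = ((i : ℕ) + 1) % n)

/-- The `n`-sun `Sₙ` (for `n ≥ 4`): the split graph on `Fin n ⊕ Fin n` whose central
clique is `{Sum.inr i}` (the vertices `vᵢ`) and whose stable set is `{Sum.inl i}`
(the vertices `sᵢ`), with `sᵢ` adjacent exactly to `vᵢ` and `v_{i+1 (mod n)}`. -/
def sunG (n : ℕ) : SimpleGraph (Fin n ⊕ Fin n) :=
  SimpleGraph.fromRel (fun a b =>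
    match a, b with
    | Sum.inr _, Sum.inr _ => True
    | Sum.inl i, Sum.inr j => (j : ℕ) = (i : ℕ) ∨ (j : ℕ) = ((i : ℕ) + 1) % n
    | _, _ => False)
/-- A split graph `G` with split partition `(S,K)` belongs to the class SVS if it is
VPT, every vertex of `K` has at most two neighbors in `S`, and whenever `S_k` with
`k ∈ {4} ∪ {2m+1 : m ≥ 2}` is induced in `G`, some vertex of `K` is adjacent to two
non-consecutive vertices of the stable set of that `S_k`. -/
def InSVS {V : Type*} (G : SimpleGraph V) (S K : Set V) : Prop :=
  IsSplitPartition G S K ∧ IsVPT G ∧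
  (∀ v ∈ K, (G.neighborSet v ∩ S).ncard ≤ 2) ∧
  (∀ k : ℕ, (k = 4 ∨ ∃ m : ℕ, 2 ≤ m ∧ k = 2 * m + 1) →
    ∀ f : sunG k ↪g G, ∃ v ∈ K, ∃ i j : Fin k,
      (i : ℕ) ≠ (j : ℕ) ∧ ((i : ℕ) + 1) % k ≠ (j : ℕ) ∧ ((j : ℕ) + 1) % k ≠ (i : ℕ) ∧
      G.Adj v (f (Sum.inl i)) ∧ G.Adj v (f (Sum.inl j)))

/-- A graph is perfect iff it has no induced odd cycle of length at least 5 and no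
induced complement of an odd cycle of length at least 5 (strong perfect graph
theorem characterization). -/
def IsPerfectGraph {V : Type*} (H : SimpleGraph V) : Prop :=
  ∀ m : ℕ, 2 ≤ m →
    ¬ Nonempty (cycleG (2 * m + 1) ↪g H) ∧ ¬ Nonempty ((cycleG (2 * m + 1))ᶜ ↪g H)

open Fin.NatCast Fin.CommRing

section Helpers
variable {n : ℕ}

lemma finv1 [NeZero n] (hn : 2 ≤ n) : ((1:Fin n):ℕ) = 1 := by
  rw [Fin.val_one']; exact Nat.mod_eq_of_lt (by omega)

lemma finv2 [NeZero n] (hn : 3 ≤ n) : ((2:Fin n):ℕ) = 2 := by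
  rw [show (2:Fin n) = ((2:ℕ):Fin n) by push_cast; ring, Fin.val_natCast]
  exact Nat.mod_eq_of_lt (by omega)

lemma finv3 [NeZero n] (hn : 4 ≤ n) : ((3:Fin n):ℕ) = 3 := by
  rw [show (3:Fin n) = ((3:ℕ):Fin n) by push_cast; ring, Fin.val_natCast]
  exact Nat.mod_eq_of_lt (by omega)

lemma finAddOneVal [NeZero n] (hn : 2 ≤ n) (i : Fin n) :
    ((i+1:Fin n):ℕ) = ((i:ℕ)+1) % n := by
  rw [Fin.val_add, finv1 hn]

lemma finAddOneEq [NeZero n] (hn : 2 ≤ n) (i j : Fin n) :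
    i + 1 = j ↔ (j:ℕ) = ((i:ℕ)+1) % n := by
  rw [Fin.ext_iff, finAddOneVal hn]; exact eq_comm

lemma fin_ne_add_one [NeZero n] (hn : 2 ≤ n) (i : Fin n) : i ≠ i + 1 := by
  intro h
  have h2 := congrArg Fin.val h
  rw [finAddOneVal hn] at h2
  have hi := i.isLt
  rcases Nat.lt_or_ge ((i:ℕ)+1) n with h'|h'
  · rw [Nat.mod_eq_of_lt h'] at h2; omega
  · have hn' : (i:ℕ)+1 = n := by omega
    rw [hn', Nat.mod_self] at h2; omega

lemma cycleG_adj {a b : Fin n} :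
    (cycleG n).Adj a b ↔ a ≠ b ∧ ((b:ℕ) = ((a:ℕ)+1)%n ∨ (a:ℕ) = ((b:ℕ)+1)%n) := by
  simp [cycleG, SimpleGraph.fromRel_adj]

lemma cycleG_adj' [NeZero n] (hn : 2 ≤ n) {a b : Fin n} :
    (cycleG n).Adj a b ↔ a ≠ b ∧ (b = a + 1 ∨ a = b + 1) := by
  rw [cycleG_adj, ← finAddOneEq hn a b, ← finAddOneEq hn b a]
  constructor
  · rintro ⟨h, h1|h2⟩
    exacts [⟨h, Or.inl h1.symm⟩, ⟨h, Or.inr h2.symm⟩]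
  · rintro ⟨h, h1|h2⟩
    exacts [⟨h, Or.inl h1.symm⟩, ⟨h, Or.inr h2.symm⟩]

lemma sunG_adj_inl_inl (i j : Fin n) : ¬ (sunG n).Adj (Sum.inl i) (Sum.inl j) := by
  simp [sunG, SimpleGraph.fromRel_adj]

lemma sunG_adj_inr_inr (i j : Fin n) : (sunG n).Adj (Sum.inr i) (Sum.inr j) ↔ i ≠ j := by
  simp [sunG, SimpleGraph.fromRel_adj]

lemma sunG_adj_inl_inr (i j : Fin n) :
    (sunG n).Adj (Sum.inl i) (Sum.inr j) ↔ ((j:ℕ) = i ∨ (j:ℕ) = ((i:ℕ)+1)%n) := by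
  simp [sunG, SimpleGraph.fromRel_adj]

lemma sunG_adj_inr_inl (i j : Fin n) :
    (sunG n).Adj (Sum.inr i) (Sum.inl j) ↔ ((i:ℕ) = j ∨ (i:ℕ) = ((j:ℕ)+1)%n) := by
  rw [SimpleGraph.adj_comm]; exact sunG_adj_inl_inr _ _

end Helpers

lemma branchGraph_adj {V : Type*} (G : SimpleGraph V) (C : Set V) (v w : V) :
    (branchGraph G C).Adj v w ↔ v ∉ C ∧ w ∉ C ∧ v ≠ w ∧ ¬ G.Adj v w ∧
      (∃ u ∈ C, G.Adj u v ∧ G.Adj u w) ∧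
      (∃ v' ∈ C, G.Adj v' v ∧ ¬ G.Adj v' w) ∧
      (∃ w' ∈ C, G.Adj w' w ∧ ¬ G.Adj w' v) := Iff.rfl

lemma edge_struct {V : Type} [Fintype V] {G : SimpleGraph V} {S K : Set V}
    (hsp : IsSplitPartition G S K) (hb : ∀ v ∈ K, (G.neighborSet v ∩ S).ncard ≤ 2)
    {v w : V} (h : (branchGraph G K).Adj v w) :
    v ∈ S ∧ w ∈ S ∧ ∃ u ∈ K, G.neighborSet u ∩ S = {v, w} := by
  obtain ⟨hv, hw, hne, hnadj, ⟨u, hu, huv, huw⟩, -, -⟩ := h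
  have hvS : v ∈ S := (hsp.1 v).resolve_right hv
  have hwS : w ∈ S := (hsp.1 w).resolve_right hw
  refine ⟨hvS, hwS, u, hu, ?_⟩
  have hsub : ({v, w} : Set V) ⊆ G.neighborSet u ∩ S := by
    rintro x (rfl|rfl)
    exacts [⟨huv, hvS⟩, ⟨huw, hwS⟩]
  exact (Set.eq_of_subset_of_ncard_le hsub
    (by rw [Set.ncard_pair hne]; exact hb u hu) (Set.toFinite _)).symm
lemma parityA {V : Type} [Fintype V] {G : SimpleGraph V} {S K C : Set V}
    (hsp : IsSplitPartition G S K) (hb : ∀ v ∈ K, (G.neighborSet v ∩ S).ncard ≤ 2)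
    {s : V} (hsC : s ∈ C) (hsS : s ∈ S) (hCcl : G.IsClique C)
    {n : ℕ} [NeZero n] (hodd : Odd n)
    (g : Fin n → V) (hadj : ∀ i : Fin n, (branchGraph G C).Adj (g i) (g (i+1))) :
    False := by
  classical
  have key : ∀ x y : V, (branchGraph G C).Adj x y → (x ∈ S ↔ y ∉ S) := by
    intro x y hxy
    obtain ⟨hx, hy, hne, hnadj, ⟨u, hu, hux, huy⟩, -, -⟩ := hxy
    constructor
    · intro hxS hyS
      have huK : u ∈ K := by
        rcases hsp.1 u with h|h
        · exact absurd hux (hsp.2.2.1 u h x hxS)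
        · exact h
      have hus : u ≠ s := fun h => (Set.disjoint_left.mp hsp.2.1 hsS (h ▸ huK))
      have hadjus : G.Adj u s := hCcl hu hsC hus
      have hsv : s ≠ x := fun h => hx (h ▸ hsC)
      have hsw : s ≠ y := fun h => hy (h ▸ hsC)
      have hsub : ({s, x, y} : Set V) ⊆ G.neighborSet u ∩ S := by
        rintro z (rfl|rfl|rfl)
        exacts [⟨hadjus, hsS⟩, ⟨hux, hxS⟩, ⟨huy, hyS⟩]
      have h3 : ({s, x, y} : Set V).ncard = 3 :=
        Set.ncard_eq_three.mpr ⟨s, x, y, hsv, hsw, hne, rfl⟩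
      have hle := Set.ncard_le_ncard hsub (Set.toFinite _)
      rw [h3] at hle
      have hb2 := hb u huK
      omega
    · intro hyS
      by_contra hxS
      have hxK : x ∈ K := (hsp.1 x).resolve_left hxS
      have hyK : y ∈ K := (hsp.1 y).resolve_left hyS
      exact hnadj (hsp.2.2.2 hxK hyK hne)
  set b : ℕ → Bool := fun k => decide (g ((k : ℕ) : Fin n) ∈ S) with hbdef
  have step : ∀ k : ℕ, b (k+1) = !(b k) := by
    intro k
    have hiff := key _ _ (hadj ((k : ℕ) : Fin n))
    have hc : (((k+1 : ℕ)) : Fin n) = ((k : ℕ) : Fin n) + 1 := by push_cast; ring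
    simp only [hbdef, hc]
    by_cases h : g (((k:ℕ) : Fin n) + 1) ∈ S
    · have h2 : g ((k:ℕ) : Fin n) ∉ S := fun hm => (hiff.mp hm) h
      simp [h, h2]
    · have h2 : g ((k:ℕ) : Fin n) ∈ S := hiff.mpr h
      simp [h, h2]
  have bxor : ∀ x y : Bool, (!(x ^^ y)) = ((!x) ^^ y) := by decide
  have alt : ∀ k : ℕ, b k = xor (decide (Odd k)) (b 0) := by
    intro k
    induction k with
    | zero => simp
    | succ k ih =>
      have hd : decide (Odd (k+1)) = !(decide (Odd k)) := by
        rw [← decide_not, decide_eq_decide]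
        simp [Nat.odd_add_one, Nat.not_odd_iff_even]
      rw [step k, ih, bxor, hd]
  have h1 : b n = b 0 := by
    simp only [hbdef, Fin.natCast_self, Nat.cast_zero]
  have h2 := alt n
  rw [h1] at h2
  rw [decide_eq_true hodd] at h2
  revert h2
  cases b 0 <;> simp
lemma keylemma {V : Type} [Fintype V] {G : SimpleGraph V} {S K : Set V}
    (hG : InSVS G S K) {n : ℕ} [NeZero n]
    (hn : n = 4 ∨ ∃ m : ℕ, 2 ≤ m ∧ n = 2 * m + 1)
    (g : Fin n → V) (hginj : Function.Injective g)
    (hadj : ∀ i : Fin n, (branchGraph G K).Adj (g i) (g (i+1))) :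
    ∃ i j : Fin n, i ≠ j ∧ i + 1 ≠ j ∧ j + 1 ≠ i ∧ (branchGraph G K).Adj (g i) (g j) := by
  obtain ⟨hsp, hvpt, hb, hsun⟩ := hG
  have hn4 : 4 ≤ n := by rcases hn with h|⟨m,hm,h⟩ <;> omega
  have hn2 : 2 ≤ n := by omega
  have hgS : ∀ i, g i ∈ S := fun i => (edge_struct hsp hb (hadj i)).1
  have hgK : ∀ i, g i ∉ K := fun i h => Set.disjoint_left.mp hsp.2.1 (hgS i) h
  choose w hwK hwN using fun i => (edge_struct hsp hb (hadj i)).2.2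
  have hwadj : ∀ i j : Fin n, G.Adj (w j) (g i) ↔ (i = j ∨ i = j + 1) := by
    intro i j
    constructor
    · intro h
      have hm : g i ∈ G.neighborSet (w j) ∩ S := ⟨h, hgS i⟩
      rw [hwN j] at hm
      simp only [Set.mem_insert_iff, Set.mem_singleton_iff] at hm
      rcases hm with h'|h'
      · exact Or.inl (hginj h')
      · exact Or.inr (hginj h')
    · rintro (rfl|rfl)
      · have hm : g i ∈ G.neighborSet (w i) ∩ S := by
          rw [hwN i]; exact Set.mem_insert _ _
        exact hm.1
      · have hm : g (j+1) ∈ G.neighborSet (w j) ∩ S := by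
          rw [hwN j]; exact Set.mem_insert_of_mem _ rfl
        exact hm.1
  have hone : (1:Fin n) ≠ 0 := by
    intro h; have h' := congrArg Fin.val h; rw [finv1 hn2, Fin.val_zero] at h'; omega
  have h2ne : ((1:Fin n)+1) ≠ 0 := by
    intro h
    have h' := congrArg Fin.val h
    rw [finAddOneVal hn2, finv1 hn2, Fin.val_zero, Nat.mod_eq_of_lt (by omega)] at h'
    omega
  have hsubc : ∀ a b : Fin n, a - 1 = b - 1 → a = b := fun a b h => by
    have h' := congrArg (· + 1) h
    simpa [sub_add_cancel] using h'
  have hwinj : Function.Injective w := by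
    intro a b hab
    have ha1 : G.Adj (w b) (g a) := by rw [← hab, hwadj]; exact Or.inl rfl
    have ha2 : G.Adj (w b) (g (a+1)) := by rw [← hab, hwadj]; exact Or.inr rfl
    rw [hwadj] at ha1 ha2
    rcases ha1 with h1|h1
    · exact h1
    · rcases ha2 with h2|h2
      · -- a + 1 = b, a = b + 1
        exfalso
        apply h2ne
        have : a = a + (1 + 1) := by rw [← add_assoc, h2, ← h1]
        exact (left_eq_add.mp this)
      · -- a + 1 = b + 1, a = b + 1
        have hab' : a = b := add_right_cancel h2
        exfalso
        apply hone
        have : b = b + 1 := by rw [← hab'] at h1 ⊢; exact h1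
        exact (left_eq_add.mp this)
  let e : Fin n ⊕ Fin n → V := Sum.elim g (fun j => w (j - 1))
  have heinj : Function.Injective e := by
    rintro (a|a) (b|b) h <;> simp only [e, Sum.elim_inl, Sum.elim_inr] at h
    · rw [hginj h]
    · exact (Set.disjoint_left.mp hsp.2.1 (h ▸ hgS a) (hwK _)).elim
    · exact (Set.disjoint_left.mp hsp.2.1 (h.symm ▸ hgS b) (hwK _)).elim
    · rw [hsubc _ _ (hwinj h)]
  have hmap : ∀ a b : Fin n ⊕ Fin n, G.Adj (e a) (e b) ↔ (sunG n).Adj a b := by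
    rintro (i|i) (j|j) <;> simp only [e, Sum.elim_inl, Sum.elim_inr]
    · constructor
      · intro h; exact absurd h (hsp.2.2.1 _ (hgS i) _ (hgS j))
      · intro h; exact absurd h (sunG_adj_inl_inl i j)
    · rw [sunG_adj_inl_inr, G.adj_comm, hwadj i (j-1), sub_add_cancel]
      constructor
      · rintro (h|h)
        · right
          exact (finAddOneEq hn2 i j).mp (by rw [h, sub_add_cancel])
        · left; rw [h]
      · rintro (h|h)
        · right; exact (Fin.ext h : j = i) ▸ rfl
        · left
          have : i + 1 = j := (finAddOneEq hn2 i j).mpr h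
          rw [← this]
          rw [add_sub_cancel_right]
    · rw [sunG_adj_inr_inl, hwadj j (i-1), sub_add_cancel]
      constructor
      · rintro (h|h)
        · right
          exact (finAddOneEq hn2 j i).mp (by rw [h, sub_add_cancel])
        · left; rw [h]
      · rintro (h|h)
        · right; exact (Fin.ext h : i = j) ▸ rfl
        · left
          have : j + 1 = i := (finAddOneEq hn2 j i).mpr h
          rw [← this, add_sub_cancel_right]
    · rw [sunG_adj_inr_inr]
      constructor
      · intro h he
        rw [he] at h
        exact G.loopless.irrefl _ h
      · intro hne
        refine hsp.2.2.2 (hwK _) (hwK _) ?_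
        intro h
        exact hne (hsubc _ _ (hwinj h))
  obtain ⟨v, hvK, i, j, hij, hij1, hij2, hvi, hvj⟩ :=
    hsun n hn ⟨⟨e, heinj⟩, fun {a b} => hmap a b⟩
  have hvi' : G.Adj v (g i) := hvi
  have hvj' : G.Adj v (g j) := hvj
  have hijF : i ≠ j := fun h => hij (by rw [h])
  have h1F : i + 1 ≠ j := fun h => hij1 (((finAddOneEq hn2 i j).mp h).symm)
  have h2F : j + 1 ≠ i := fun h => hij2 (((finAddOneEq hn2 j i).mp h).symm)
  refine ⟨i, j, hijF, h1F, h2F, ?_⟩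
  rw [branchGraph_adj]
  refine ⟨hgK i, hgK j, fun h => hijF (hginj h), hsp.2.2.1 _ (hgS i) _ (hgS j),
    ⟨v, hvK, hvi', hvj'⟩, ⟨w (i-1), hwK _, ?_, ?_⟩, ⟨w (j-1), hwK _, ?_, ?_⟩⟩
  · rw [hwadj]; right; rw [sub_add_cancel]
  · rw [hwadj, sub_add_cancel]
    rintro (h|h)
    · exact h2F (by rw [h, sub_add_cancel])
    · exact hijF h.symm
  · rw [hwadj]; right; rw [sub_add_cancel]
  · rw [hwadj, sub_add_cancel]
    rintro (h|h)
    · exact h1F (by rw [h, sub_add_cancel])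
    · exact hijF h
instance cycleG.adjDecidable (n : ℕ) : DecidableRel (cycleG n).Adj :=
  fun _ _ => decidable_of_iff' _ cycleG_adj

instance cycleGcompl.adjDecidable (n : ℕ) : DecidableRel (cycleG n)ᶜ.Adj :=
  fun a b => decidable_of_iff' _ ((cycleG n).compl_adj a b)

def c5map : Fin 5 → Fin 5 := ![0, 2, 4, 1, 3]

def c4map (n : ℕ) (hn : 7 ≤ n) : Fin 4 → Fin n
  | 0 => ⟨0, by omega⟩
  | 1 => ⟨3, by omega⟩
  | 2 => ⟨1, by omega⟩
  | 3 => ⟨4, by omega⟩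

lemma c4map_val (n : ℕ) (hn : 7 ≤ n) :
    ((c4map n hn 0 : Fin n) : ℕ) = 0 ∧ ((c4map n hn 1 : Fin n) : ℕ) = 3 ∧
    ((c4map n hn 2 : Fin n) : ℕ) = 1 ∧ ((c4map n hn 3 : Fin n) : ℕ) = 4 :=
  ⟨rfl, rfl, rfl, rfl⟩

lemma cycleG_adj_of_val {n : ℕ} {a b : Fin n} (h : (b:ℕ) = (a:ℕ)+1) :
    (cycleG n).Adj a b := by
  rw [cycleG_adj]
  have hb := b.isLt
  refine ⟨fun he => by rw [he] at h; omega, Or.inl ?_⟩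
  rw [h, Nat.mod_eq_of_lt (by omega)]

lemma compl_cycleG_adj_of_val {n : ℕ} {a b : Fin n} (hn : 7 ≤ n)
    (ha : (a:ℕ) ≤ 5) (hb : (b:ℕ) ≤ 5)
    (h1 : (a:ℕ) ≠ (b:ℕ)) (h2 : (b:ℕ) ≠ (a:ℕ)+1) (h3 : (a:ℕ) ≠ (b:ℕ)+1) :
    ((cycleG n)ᶜ).Adj a b := by
  rw [SimpleGraph.compl_adj, cycleG_adj]
  refine ⟨fun he => h1 (congrArg Fin.val he), ?_⟩
  rintro ⟨-, h|h⟩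
  · rw [Nat.mod_eq_of_lt (by omega)] at h; exact h2 h
  · rw [Nat.mod_eq_of_lt (by omega)] at h; exact h3 h
lemma c4map_inj (n : ℕ) (hn : 7 ≤ n) : Function.Injective (c4map n hn) := by
  intro a b h
  have hv := congrArg Fin.val h
  fin_cases a <;> fin_cases b <;>
    first
    | rfl
    | exact absurd hv (by norm_num : ¬(0:ℕ)=3)
    | exact absurd hv (by norm_num : ¬(0:ℕ)=1)
    | exact absurd hv (by norm_num : ¬(0:ℕ)=4)
    | exact absurd hv (by norm_num : ¬(3:ℕ)=0)
    | exact absurd hv (by norm_num : ¬(3:ℕ)=1)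
    | exact absurd hv (by norm_num : ¬(3:ℕ)=4)
    | exact absurd hv (by norm_num : ¬(1:ℕ)=0)
    | exact absurd hv (by norm_num : ¬(1:ℕ)=3)
    | exact absurd hv (by norm_num : ¬(1:ℕ)=4)
    | exact absurd hv (by norm_num : ¬(4:ℕ)=0)
    | exact absurd hv (by norm_num : ¬(4:ℕ)=3)
    | exact absurd hv (by norm_num : ¬(4:ℕ)=1)

lemma compl_cycleG_adj_of_val' {n : ℕ} (hn : 7 ≤ n) {a b : Fin n} (x y : ℕ)
    (hx : (a:ℕ) = x) (hy : (b:ℕ) = y) (hx5 : x ≤ 5) (hy5 : y ≤ 5)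
    (h1 : x ≠ y) (h2 : y ≠ x+1) (h3 : x ≠ y+1) :
    ((cycleG n)ᶜ).Adj a b :=
  compl_cycleG_adj_of_val hn (by omega) (by omega) (by omega) (by omega) (by omega)

lemma c4map_consec (n : ℕ) (hn : 7 ≤ n) :
    ∀ i : Fin 4, ((cycleG n)ᶜ).Adj (c4map n hn i) (c4map n hn (i+1)) := by
  intro i
  fin_cases i
  · exact compl_cycleG_adj_of_val' hn 0 3 rfl rfl (by omega) (by omega) (by omega) (by omega) (by omega)
  · exact compl_cycleG_adj_of_val' hn 3 1 rfl rfl (by omega) (by omega) (by omega) (by omega) (by omega)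
  · exact compl_cycleG_adj_of_val' hn 1 4 rfl rfl (by omega) (by omega) (by omega) (by omega) (by omega)
  · exact compl_cycleG_adj_of_val' hn 4 0 rfl rfl (by omega) (by omega) (by omega) (by omega) (by omega)

lemma c5map_inj : Function.Injective c5map := by decide

lemma c5map_consec : ∀ i : Fin 5, ((cycleG 5)ᶜ).Adj (c5map i) (c5map (i+1)) := by decide

lemma c5map_noncons : ∀ i j : Fin 5, i ≠ j → i+1 ≠ j → j+1 ≠ i →
    ¬ ((cycleG 5)ᶜ).Adj (c5map i) (c5map j) := by decide
/-- If `G` belongs to SVS, then every branch graph of `G` is perfect. -/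
theorem stmt12 {V : Type} [Fintype V] (G : SimpleGraph V) (S K : Set V)
    (hG : InSVS G S K) :
    ∀ C : Set V, IsMaxClique G C → IsPerfectGraph (branchGraph G C) := by
  intro C hC m hm
  haveI : NeZero (2*m+1) := ⟨by omega⟩
  have hodd : Odd (2*m+1) := ⟨m, by ring⟩
  have hm2 : 2 ≤ 2*m+1 := by omega
  have hCeq : (∃ s ∈ C, s ∈ S) ∨ K = C := by
    by_cases hs : ∃ s ∈ C, s ∈ S
    · exact Or.inl hs
    · refine Or.inr (hC.2 K hG.1.2.2.2 (fun v hv => ?_))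
      exact (hG.1.1 v).resolve_left (fun hvS => hs ⟨v, hv, hvS⟩)
  constructor
  · rintro ⟨f⟩
    rcases hCeq with ⟨s, hsC, hsS⟩ | hKC
    · exact parityA hG.1 hG.2.2.1 hsC hsS hC.1 hodd (fun i => f i)
        (fun i => f.map_rel_iff.mpr
          ((cycleG_adj' hm2).mpr ⟨fin_ne_add_one hm2 i, Or.inl rfl⟩))
    · subst hKC
      obtain ⟨i, j, hij, h1, h2, hadj⟩ := keylemma hG (Or.inr ⟨m, hm, rfl⟩)
        (fun i => f i) f.injective
        (fun i => f.map_rel_iff.mpr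
          ((cycleG_adj' hm2).mpr ⟨fin_ne_add_one hm2 i, Or.inl rfl⟩))
      rcases ((cycleG_adj' hm2).mp (f.map_rel_iff.mp hadj)).2 with h|h
      · exact h1 h.symm
      · exact h2 h.symm
  · rintro ⟨f⟩
    rcases hCeq with ⟨s, hsC, hsS⟩ | hKC
    · have hv2 : ((1+1 : Fin (2*m+1)) : ℕ) = 2 := by
        rw [one_add_one_eq_two]; exact finv2 (by omega)
      have hv3 : ((1+1+1 : Fin (2*m+1)) : ℕ) = 3 := by
        rw [one_add_one_eq_two, two_add_one_eq_three]; exact finv3 (by omega)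
      refine parityA hG.1 hG.2.2.1 hsC hsS hC.1 hodd (fun i => f (2 * i)) (fun i => ?_)
      refine f.map_rel_iff.mpr ?_
      rw [SimpleGraph.compl_adj]
      have hmul : (2 : Fin (2*m+1)) * (i+1) = 2*i + (1+1) := by ring
      rw [hmul]
      constructor
      · intro hcon
        have h0 := left_eq_add.mp hcon
        have hval := congrArg Fin.val h0
        rw [hv2, Fin.val_zero] at hval; omega
      · rw [cycleG_adj' hm2]
        rintro ⟨-, h|h⟩
        · have h' := add_left_cancel h
          have hval := congrArg Fin.val h'
          rw [hv2, finv1 hm2] at hval; omega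
        · rw [add_assoc] at h
          have h0 := left_eq_add.mp h
          have hval := congrArg Fin.val h0
          rw [hv3, Fin.val_zero] at hval; omega
    · subst hKC
      rcases Nat.lt_or_ge m 3 with hm3|hm3
      · have hmeq : m = 2 := by omega
        subst hmeq
        obtain ⟨i, j, hij, h1, h2, hadj⟩ := keylemma hG (Or.inr ⟨2, le_refl 2, rfl⟩)
          (fun i => f (c5map i))
          (f.injective.comp c5map_inj)
          (fun i => f.map_rel_iff.mpr (c5map_consec i))
        exact c5map_noncons i j hij h1 h2 (f.map_rel_iff.mp hadj)
      · have hn7 : 7 ≤ 2*m+1 := by omega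
        haveI : NeZero 4 := ⟨by norm_num⟩
        obtain ⟨i, j, hij, h1, h2, hadj⟩ := keylemma hG (Or.inl rfl)
          (fun i => f (c4map (2*m+1) hn7 i))
          (f.injective.comp (c4map_inj (2*m+1) hn7))
          (fun i => f.map_rel_iff.mpr (c4map_consec (2*m+1) hn7 i))
        have hc := f.map_rel_iff.mp hadj
        rw [SimpleGraph.compl_adj] at hc
        have hijv : (i:ℕ) ≠ (j:ℕ) := fun h => hij (Fin.ext h)
        have h1v : ((i:ℕ)+1) % 4 ≠ (j:ℕ) :=
          fun h => h1 ((finAddOneEq (by norm_num) i j).mpr h.symm)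
        have h2v : ((j:ℕ)+1) % 4 ≠ (i:ℕ) :=
          fun h => h2 ((finAddOneEq (by norm_num) j i).mpr h.symm)
        have hIJ : ((i:ℕ) = 0 ∧ (j:ℕ) = 2) ∨ ((i:ℕ) = 2 ∧ (j:ℕ) = 0) ∨
            ((i:ℕ) = 1 ∧ (j:ℕ) = 3) ∨ ((i:ℕ) = 3 ∧ (j:ℕ) = 1) := by
          have := i.isLt; have := j.isLt; omega
        rcases hIJ with ⟨ha,hb⟩|⟨ha,hb⟩|⟨ha,hb⟩|⟨ha,hb⟩
        · rw [(Fin.ext ha : i = 0), (Fin.ext hb : j = 2)] at hc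
          exact hc.2 (cycleG_adj_of_val rfl)
        · rw [(Fin.ext ha : i = 2), (Fin.ext hb : j = 0)] at hc
          exact hc.2 (cycleG_adj_of_val rfl).symm
        · rw [(Fin.ext ha : i = 1), (Fin.ext hb : j = 3)] at hc
          exact hc.2 (cycleG_adj_of_val rfl)
        · rw [(Fin.ext ha : i = 3), (Fin.ext hb : j = 1)] at hc
          exact hc.2 (cycleG_adj_of_val rfl).symm
end

section
/- Let T_2^3 be the spider graph consisting of a central vertex and three edge-disjoint paths of two edges each, pairwise intersecting only in the central vertex. Then T_2^3 is a VPT graph and B(T_2^3/C) is 2-colorable for every clique C of T_2^3, yet T_2^3 does not belong to [2,2,1] (i.e., T_2^3 is not an interval graph). -/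
open SimpleGraph

/-- The spider `T₂³`: a central vertex `0` and three edge-disjoint paths of two edges
each (`0-1-2`, `0-3-4`, `0-5-6`) pairwise intersecting only in the central vertex. -/
def spider : SimpleGraph (Fin 7) :=
  SimpleGraph.fromRel (fun a b =>
    (a, b) ∈ ([(0, 1), (1, 2), (0, 3), (3, 4), (0, 5), (5, 6)] : List (Fin 7 × Fin 7)))


instance : DecidableRel spider.Adj := fun a b =>
  decidable_of_iff _ (SimpleGraph.fromRel_adj _ a b).symm

def host : SimpleGraph (Fin 6) :=
  SimpleGraph.fromRel (fun a b =>
    (a, b) ∈ ([(0,1),(1,2),(2,3),(2,4),(4,5)] : List (Fin 6 × Fin 6)))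

instance : DecidableRel host.Adj := fun a b =>
  decidable_of_iff _ (SimpleGraph.fromRel_adj _ a b).symm

def psetL : Fin 7 → List (Fin 6) :=
  ![[1,2,4], [0,1], [0], [2,3], [3], [4,5], [5]]

def pset (v : Fin 7) : Set (Fin 6) := {x | x ∈ psetL v}

instance (v : Fin 7) (x : Fin 6) : Decidable (x ∈ pset v) :=
  inferInstanceAs (Decidable (x ∈ psetL v))

instance (x : Fin 6) (v : Fin 7) (y : Fin 6) : Decidable (y ∈ host.neighborSet x ∩ pset v) :=
  inferInstanceAs (Decidable (host.Adj x y ∧ y ∈ psetL v))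

instance (u v : Fin 7) : Decidable ((pset u ∩ pset v).Nonempty) :=
  inferInstanceAs (Decidable (∃ x, x ∈ psetL u ∧ x ∈ psetL v))

example : ∀ u v : Fin 7, u ≠ v → (spider.Adj u v ↔ (pset u ∩ pset v).Nonempty) := by decide

lemma ncard_le_two_of (s : Set (Fin 6)) (u w : Fin 6) (hs : ∀ y, y ∈ s → y = u ∨ y = w) :
    s.ncard ≤ 2 := by
  have hsub : s ⊆ {u, w} := fun y hy => by rcases hs y hy with h | h <;> simp [h]
  refine (Set.ncard_le_ncard hsub (Set.toFinite _)).trans ?_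
  refine (Set.ncard_insert_le _ _).trans ?_
  simp

lemma deg_cond : ∀ (v : Fin 7), ∀ x ∈ pset v, (host.neighborSet x ∩ pset v).ncard ≤ 2 := by
  have key : ∀ (v : Fin 7) (x : Fin 6), ∃ u w : Fin 6,
      ∀ y, y ∈ host.neighborSet x ∩ pset v → y = u ∨ y = w := by decide
  intro v x _
  obtain ⟨u, w, hy⟩ := key v x
  exact ncard_le_two_of _ u w hy

lemma walk_pair {x y : Fin 6} (v : Fin 7) (h : host.Adj x y)
    (hx : x ∈ pset v) (hy : y ∈ pset v) :
    ∃ p : host.Walk x y, ∀ z ∈ p.support, z ∈ pset v := by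
  refine ⟨Walk.cons h Walk.nil, ?_⟩
  intro z hz
  simp [Walk.support_cons] at hz
  rcases hz with rfl | rfl <;> assumption

lemma walk_nil {x : Fin 6} (v : Fin 7) (hx : x ∈ pset v) :
    ∃ p : host.Walk x x, ∀ z ∈ p.support, z ∈ pset v := by
  refine ⟨Walk.nil, ?_⟩
  intro z hz
  simp at hz
  subst hz; assumption

lemma walk_cond : ∀ v : Fin 7, ∀ x ∈ pset v, ∀ y ∈ pset v,
    ∃ p : host.Walk x y, ∀ z ∈ p.support, z ∈ pset v := by
  intro v x hx y hy
  by_cases hxy : x = y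
  · subst hxy; exact walk_nil v hx
  by_cases hadj : host.Adj x y
  · exact walk_pair v hadj hx hy
  -- remaining: only (1,4) and (4,1) in pset 0
  have hv : v = 0 ∧ ((x = 1 ∧ y = 4) ∨ (x = 4 ∧ y = 1)) := by
    revert v x y; decide
  obtain ⟨rfl, h | h⟩ := hv <;> obtain ⟨rfl, rfl⟩ := h
  · exact ⟨Walk.cons (show host.Adj 1 2 by decide)
      (Walk.cons (show host.Adj 2 4 by decide) Walk.nil), by decide⟩
  · exact ⟨Walk.cons (show host.Adj 4 2 by decide)
      (Walk.cons (show host.Adj 2 1 by decide) Walk.nil), by decide⟩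

lemma host_connected : host.Connected := by
  rw [connected_iff]
  exact ⟨by decide, ⟨0⟩⟩

instance (e : Sym2 (Fin 6)) : DecidableRel (host \ fromEdgeSet {e}).Adj := fun a b =>
  decidable_of_iff (host.Adj a b ∧ ¬(s(a,b) = e ∧ a ≠ b)) (by
    simp [sdiff_adj, fromEdgeSet_adj])

lemma host_acyclic : host.IsAcyclic := by
  rw [isAcyclic_iff_forall_adj_isBridge]
  intro v w hvw
  rw [isBridge_iff]
  fin_cases v <;> fin_cases w <;> first
    | exact absurd hvw (by decide)
    | decide

lemma host_tree : host.IsTree := ⟨host_connected, host_acyclic⟩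

instance (v : Fin 7) : Decidable ((pset v).Nonempty) :=
  inferInstanceAs (Decidable (∃ x, x ∈ psetL v))

def theRep : VPTRep spider host where
  tree := host_tree
  path := pset
  isPath := by
    intro v
    refine ⟨by revert v; decide, walk_cond v, deg_cond v⟩
  adj_iff := by decide

lemma spider_vpt : IsVPT spider := ⟨6, host, ⟨theRep⟩⟩

variable {W : Type*} [DecidableEq W] {T : SimpleGraph W}

def TBtw (T : SimpleGraph W) (a b c : W) : Prop := ∀ p : T.Walk a c, b ∈ p.support

omit [DecidableEq W] in
lemma btw_symm {a b c : W} (h : TBtw T a b c) : TBtw T c b a := fun p => by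
  have := h p.reverse
  rwa [Walk.support_reverse, List.mem_reverse] at this

lemma btw_of_path (htree : T.IsTree) {a b c : W} (p : T.Walk a c) (hp : p.IsPath)
    (hb : b ∈ p.support) : TBtw T a b c := by
  intro q
  have huniq := (isTree_iff_existsUnique_path.mp htree).2 a c
  obtain ⟨P, _, hP⟩ := huniq
  have h1 : q.bypass = P := hP _ q.bypass_isPath
  have h2 : p = P := hP _ hp
  have : b ∈ q.bypass.support := by rw [h1, ← h2]; exact hb
  exact q.support_bypass_subset this

lemma btw_asymm (htree : T.IsTree) {a b c : W} (hab : a ≠ b) (h : TBtw T a b c) :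
    ¬ TBtw T b a c := by
  intro h'
  obtain ⟨w⟩ := htree.isConnected.preconnected a c
  set p := w.bypass with hp
  have hpath : p.IsPath := w.bypass_isPath
  have hb : b ∈ p.support := h p
  have ha : a ∈ (p.dropUntil b hb).support := h' _
  have hsplit := p.take_spec hb
  have hnodup : ((p.takeUntil b hb).support ++ (p.dropUntil b hb).support.tail).Nodup := by
    rw [← Walk.support_append, hsplit]
    exact hpath.support_nodup
  have ha' : a ∈ (p.dropUntil b hb).support.tail := by
    have ha2 := ha
    rw [Walk.support_eq_cons] at ha2
    rcases List.mem_cons.mp ha2 with h | h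
    · exact absurd h hab
    · exact h
  exact (List.disjoint_of_nodup_append hnodup) (Walk.start_mem_support _) ha'

lemma btw_trans (htree : T.IsTree) {x a b c : W} (hab : a ≠ b)
    (h1 : TBtw T x a c) (h2 : TBtw T a b c) : TBtw T x a b := by
  intro w
  by_contra ha
  have h3 : ¬ TBtw T b a c := btw_asymm htree hab h2
  rw [TBtw] at h3
  push_neg at h3
  obtain ⟨u, hu⟩ := h3
  have := h1 (w.append u)
  rw [Walk.mem_support_append_iff] at this
  rcases this with h | h
  · exact ha h
  · exact hu h

omit [DecidableEq W] in
lemma firstMeet (L : List W) :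
    ∀ {b a : W} (w : T.Walk b a), a ∈ L →
      ∃ m, m ∈ L ∧ m ∈ w.support ∧ ∃ s : T.Walk b m,
        (∀ x ∈ s.support, x ∈ L → x = m) := by
  intro b a w
  induction w with
  | @nil u =>
    intro hb
    exact ⟨u, hb, by simp, Walk.nil, by simp +contextual⟩
  | @cons u v x h w ih =>
    intro hx
    by_cases hu : u ∈ L
    · exact ⟨u, hu, by simp, Walk.nil, by simp +contextual⟩
    · obtain ⟨m, hm, hmw, s, hs⟩ := ih hx
      refine ⟨m, hm, by simp [hmw], Walk.cons h s, ?_⟩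
      intro z hz hzL
      rw [Walk.support_cons, List.mem_cons] at hz
      rcases hz with rfl | hz
      · exact absurd hzL hu
      · exact hs z hz hzL

omit [DecidableEq W] in
lemma exists_next {u v : W} (w : T.Walk u v) (h : u ≠ v) :
    ∃ y, T.Adj u y ∧ y ∈ w.support := by
  cases w with
  | nil => exact absurd rfl h
  | cons h' p =>
    exact ⟨_, h', by rw [Walk.support_cons]; exact List.mem_cons_of_mem _ p.start_mem_support⟩

lemma three_point (htree : T.IsTree) [Finite W]
    (hdeg : ∀ x : W, (T.neighborSet x).ncard ≤ 2)
    {a b c : W} (hab : a ≠ b) (hac : a ≠ c) (hbc : b ≠ c) :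
    TBtw T a b c ∨ TBtw T b a c ∨ TBtw T a c b := by
  have huniq := (isTree_iff_existsUnique_path.mp htree).2
  obtain ⟨P, hP, hPu⟩ := huniq b c
  by_cases haP : a ∈ P.support
  · exact Or.inr (Or.inl (btw_of_path htree P hP haP))
  obtain ⟨Q, hQ, _⟩ := huniq a b
  by_cases hcQ : c ∈ Q.support
  · exact Or.inr (Or.inr (btw_of_path htree Q hQ hcQ))
  obtain ⟨R, hR, hRu⟩ := huniq a c
  by_cases hbR : b ∈ R.support
  · exact Or.inl (btw_of_path htree R hR hbR)
  exfalso
  -- first meeting point of Q.reverse (from b to a) with R.support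
  obtain ⟨m, hmR, hmQ, s₀, hs₀⟩ := firstMeet R.support Q.reverse (R.start_mem_support)
  -- replace s₀ by its bypass
  set s := s₀.bypass with hsdef
  have hspath : s.IsPath := s₀.bypass_isPath
  have hs : ∀ x ∈ s.support, x ∈ R.support → x = m :=
    fun x hx => hs₀ x (s₀.support_bypass_subset hx)
  have hmb : m ≠ b := fun h => hbR (h ▸ hmR)
  have hmc : m ≠ c := by
    rintro rfl
    rw [Walk.support_reverse, List.mem_reverse] at hmQ
    exact hcQ hmQ
  by_cases hma : m = a
  · -- build a path from b to c through a, contradicting haP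
    subst hma
    have hnodup : (s.append R).support.Nodup := by
      rw [Walk.support_append, List.nodup_append]
      refine ⟨hspath.support_nodup, hR.support_nodup.tail, ?_⟩
      intro x hx y hx' hxy
      subst hxy
      have hxR : x ∈ R.support := List.mem_of_mem_tail hx'
      have hxm : x = m := hs x hx hxR
      have hmt : m ∈ R.support.tail := hxm ▸ hx'
      have hnod := hR.support_nodup
      rw [Walk.support_eq_cons] at hnod
      exact (List.nodup_cons.mp hnod).1 hmt
    have htpath : (s.append R).IsPath := (Walk.isPath_def _).mpr hnodup
    have : s.append R = P := hPu _ htpath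
    have haM : m ∈ (s.append R).support := by
      rw [Walk.mem_support_append_iff]
      exact Or.inl s.end_mem_support
    rw [this] at haM
    exact haP haM
  · -- m is interior: three distinct neighbors
    obtain ⟨y2, h2, hy2⟩ := exists_next (R.dropUntil m hmR) hmc
    have hy2R : y2 ∈ R.support := R.support_dropUntil_subset hmR hy2
    obtain ⟨y1, h1, hy1'⟩ := exists_next (R.takeUntil m hmR).reverse hma
    have hy1 : y1 ∈ (R.takeUntil m hmR).support := by
      rwa [Walk.support_reverse, List.mem_reverse] at hy1'
    have hy1R : y1 ∈ R.support := R.support_takeUntil_subset hmR hy1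
    obtain ⟨y3, h3, hy3'⟩ := exists_next s.reverse hmb
    have hy3 : y3 ∈ s.support := by
      rwa [Walk.support_reverse, List.mem_reverse] at hy3'
    have hy3R : y3 ∉ R.support := fun hc => h3.ne' (hs y3 hy3 hc)
    have h12 : y1 ≠ y2 := by
      intro h
      subst h
      have hnodup : ((R.takeUntil m hmR).support ++ (R.dropUntil m hmR).support.tail).Nodup := by
        rw [← Walk.support_append, R.take_spec hmR]
        exact hR.support_nodup
      have hy2t : y1 ∈ (R.dropUntil m hmR).support.tail := by
        have := hy2
        rw [Walk.support_eq_cons] at this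
        rcases List.mem_cons.mp this with h | h
        · exact absurd h h1.ne'
        · exact h
      exact (List.disjoint_of_nodup_append hnodup) hy1 hy2t
    have h13 : y3 ≠ y1 := fun h => hy3R (h ▸ hy1R)
    have h23 : y3 ≠ y2 := fun h => hy3R (h ▸ hy2R)
    have hsub : ({y1, y2, y3} : Set W) ⊆ T.neighborSet m := by
      intro z hz
      rcases hz with rfl | rfl | rfl
      · exact h1
      · exact h2
      · exact h3
    have h3card : ({y1, y2, y3} : Set W).ncard = 3 :=
      Set.ncard_eq_three.mpr ⟨y1, y2, y3, h12, h13.symm, h23.symm, rfl⟩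
    have := Set.ncard_le_ncard hsub (Set.toFinite _)
    rw [h3card] at this
    exact absurd (this.trans (hdeg m)) (by norm_num)

lemma core [Finite W] (htree : T.IsTree)
    (hdeg : ∀ x : W, (T.neighborSet x).ncard ≤ 2)
    {Q B : Set W}
    (hQ : ∀ x ∈ Q, ∀ y ∈ Q, ∃ p : T.Walk x y, ∀ z ∈ p.support, z ∈ Q)
    (hB : ∀ x ∈ B, ∀ y ∈ B, ∃ p : T.Walk x y, ∀ z ∈ p.support, z ∈ B)
    {a b c : W} (haQ : a ∈ Q) (hcQ : c ∈ Q) (hbB : b ∈ B)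
    (haB : a ∉ B) (hcB : c ∉ B) (hac : a ≠ c)
    (hbtw : TBtw T a b c) : B ⊆ Q := by
  obtain ⟨R, hR, hRu⟩ := (isTree_iff_existsUnique_path.mp htree).2 a c
  have hRQ : ∀ z ∈ R.support, z ∈ Q := by
    obtain ⟨w, hw⟩ := hQ a haQ c hcQ
    have hwR : w.bypass = R := hRu _ w.bypass_isPath
    intro z hz
    rw [← hwR] at hz
    exact hw z (w.support_bypass_subset hz)
  intro x hxB
  have hxa : x ≠ a := fun h => haB (h ▸ hxB)
  have hxc : x ≠ c := fun h => hcB (h ▸ hxB)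
  rcases three_point (a := a) (b := x) (c := c) htree hdeg hxa.symm hac hxc with h | h | h
  · -- TBtw T a x c : x on the path
    exact hRQ x (h R)
  · -- TBtw T x a c
    have hxab : TBtw T x a b := btw_trans htree (fun h => haB (h ▸ hbB)) h hbtw
    obtain ⟨w, hw⟩ := hB x hxB b hbB
    exact absurd (hw a (hxab w)) haB
  · -- TBtw T a c x, i.e. TBtw T x c a
    have h' : TBtw T x c a := btw_symm (a := a) (b := c) (c := x) h
    have hbtw' : TBtw T c b a := btw_symm hbtw
    have hxcb : TBtw T x c b := btw_trans htree (fun h => hcB (h ▸ hbB)) h' hbtw'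
    obtain ⟨w, hw⟩ := hB x hxB b hbB
    exact absurd (hw c (hxcb w)) hcB

/-- `T₂³` is a VPT graph and `B(T₂³/C)` is `2`-colorable for every
clique `C` of `T₂³`, yet `T₂³ ∉ [2,2,1]`. -/
theorem stmt14 :
    IsVPT spider ∧
    (∀ C : Set (Fin 7), IsMaxClique spider C → (branchGraph spider C).Colorable 2) ∧
    ¬ MemH21 spider 2 := by
  refine ⟨spider_vpt, ?_, ?_⟩
  · -- branch graphs of cliques are edgeless, hence 2-colorable
    intro C hC
    have notri : ∀ x y z : Fin 7, spider.Adj x y → spider.Adj x z → spider.Adj y z → False := by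
      decide
    refine ⟨SimpleGraph.Coloring.mk (fun _ => 0) ?_⟩
    intro v w h
    exfalso
    obtain ⟨h1, h2, h3, h4, ⟨u, hu, hu1, hu2⟩, ⟨v', hv', hv1, hv2⟩, ⟨w', hw', hw1, hw2⟩⟩ := h
    have huv' : u ≠ v' := fun e => hv2 (e ▸ hu2)
    have huw' : u ≠ w' := fun e => hw2 (e ▸ hu1)
    have hvw' : v' ≠ w' := fun e => hw2 (e ▸ hv1)
    exact notri u v' w' (hC.1 hu hv' huv') (hC.1 hu hw' huw') (hC.1 hv' hw' hvw')
  · -- not interval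
    rintro ⟨n, T, rep, hdeg⟩
    have htree := rep.tree
    have hadj : ∀ u v : Fin 7, u ≠ v → spider.Adj u v → (rep.path u ∩ rep.path v).Nonempty :=
      fun u v h ha => (rep.adj_iff u v h).1 ha
    have hdisj : ∀ u v : Fin 7, u ≠ v → ¬ spider.Adj u v →
        ∀ x, x ∈ rep.path u → x ∉ rep.path v :=
      fun u v h hna x hx hx' => hna ((rep.adj_iff u v h).2 ⟨x, hx, hx'⟩)
    obtain ⟨a, ha0, ha1⟩ := hadj 0 1 (by decide) (by decide)
    obtain ⟨b, hb0, hb3⟩ := hadj 0 3 (by decide) (by decide)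
    obtain ⟨c, hc0, hc5⟩ := hadj 0 5 (by decide) (by decide)
    have hab : a ≠ b := fun h => hdisj 1 3 (by decide) (by decide) a ha1 (h ▸ hb3)
    have hac : a ≠ c := fun h => hdisj 1 5 (by decide) (by decide) a ha1 (h ▸ hc5)
    have hbc : b ≠ c := fun h => hdisj 3 5 (by decide) (by decide) b hb3 (h ▸ hc5)
    have wp : ∀ v, ∀ x ∈ rep.path v, ∀ y ∈ rep.path v,
        ∃ p : T.Walk x y, ∀ z ∈ p.support, z ∈ rep.path v := fun v => (rep.isPath v).2.1
    rcases three_point (a := a) (b := b) (c := c) htree hdeg hab hac hbc with h | h | h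
    · have hsub := core htree hdeg (wp 0) (wp 3) ha0 hc0 hb3
        (hdisj 1 3 (by decide) (by decide) a ha1)
        (hdisj 5 3 (by decide) (by decide) c hc5) hac h
      obtain ⟨p, hp3, hp4⟩ := hadj 3 4 (by decide) (by decide)
      exact hdisj 0 4 (by decide) (by decide) p (hsub hp3) hp4
    · have hsub := core htree hdeg (wp 0) (wp 1) hb0 hc0 ha1
        (hdisj 3 1 (by decide) (by decide) b hb3)
        (hdisj 5 1 (by decide) (by decide) c hc5) hbc h
      obtain ⟨p, hp1, hp2⟩ := hadj 1 2 (by decide) (by decide)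
      exact hdisj 0 2 (by decide) (by decide) p (hsub hp1) hp2
    · have hsub := core htree hdeg (wp 0) (wp 5) ha0 hb0 hc5
        (hdisj 1 5 (by decide) (by decide) a ha1)
        (hdisj 3 5 (by decide) (by decide) b hb3) hab h
      obtain ⟨p, hp5, hp6⟩ := hadj 5 6 (by decide) (by decide)
      exact hdisj 0 6 (by decide) (by decide) p (hsub hp5) hp6
end
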